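/- Let H be a Hilbert space and let e_λ^k, f_λ^k (1 ≤ k ≤ n, λ ∈ Λ) be vectors in H satisfying Σ_{k=1}^n e_λ^k ⊗ e_μ^k = Σ_{k=1}^n f_λ^k ⊗ f_μ^k for all λ, μ ∈ Λ. Then there is an n×n numerical unitary matrix W such that W (e_λ^1, …, e_λ^n)ᵀ = (f_λ^1, …, f_λ^n)ᵀ for every λ ∈ Λ. -/

import Mathlib

open MeasureTheory Metric Set
open scoped ENNReal

noncomputable section

/-- The rank-one operator `x ⊗ y` on a complex Hilbert space, `(x ⊗ y) u = ⟨u, y⟩ x`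
(inner product linear in `u`). -/
def rankOne {H : Type*} [NormedAddCommGroup H] [InnerProductSpace ℂ H] (x y : H) :
    H →L[ℂ] H :=
  (innerSL ℂ y).smulRight x

/-- Coordinate vector `(⟪g k, u⟫)ₖ` in `ℂⁿ`. -/
private def toCoords {H : Type*} [NormedAddCommGroup H] [InnerProductSpace ℂ H] {n : ℕ}
    (g : Fin n → H) (u : H) : EuclideanSpace ℂ (Fin n) :=
  WithLp.toLp 2 (fun k => inner ℂ (g k) u)

/-- If two families in `ℂⁿ` have the same Gram "matrix", there is a linear isometry of `ℂⁿ`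
carrying the first family to the second. -/
private theorem auxU {n : ℕ} {I : Type*} (E F : I → EuclideanSpace ℂ (Fin n))
    (gram : ∀ p q : I, (inner ℂ (E p) (E q) : ℂ) = (inner ℂ (F p) (F q) : ℂ)) :
    ∃ U : EuclideanSpace ℂ (Fin n) →ₗᵢ[ℂ] EuclideanSpace ℂ (Fin n), ∀ p, U (E p) = F p := by
  classical
  have gram2 : ∀ c d : I →₀ ℂ,
      (inner ℂ ((Finsupp.linearCombination ℂ E) c) ((Finsupp.linearCombination ℂ E) d) : ℂ)
        = inner ℂ ((Finsupp.linearCombination ℂ F) c) ((Finsupp.linearCombination ℂ F) d) := by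
    intro c d
    rw [Finsupp.linearCombination_apply, Finsupp.linearCombination_apply,
      Finsupp.linearCombination_apply, Finsupp.linearCombination_apply]
    unfold Finsupp.sum
    rw [sum_inner, sum_inner]
    refine Finset.sum_congr rfl fun p _ => ?_
    rw [inner_sum, inner_sum]
    refine Finset.sum_congr rfl fun q _ => ?_
    rw [inner_smul_left, inner_smul_left, inner_smul_right, inner_smul_right, gram p q]
  have ker_le : LinearMap.ker (Finsupp.linearCombination ℂ E)
      ≤ LinearMap.ker (Finsupp.linearCombination ℂ F) := by
    intro c hc
    rw [LinearMap.mem_ker] at hc ⊢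
    have h0 : (inner ℂ ((Finsupp.linearCombination ℂ F) c)
        ((Finsupp.linearCombination ℂ F) c) : ℂ) = 0 := by
      rw [← gram2, hc, inner_zero_left]
    exact inner_self_eq_zero.mp h0
  let T : LinearMap.range (Finsupp.linearCombination ℂ E) →ₗ[ℂ] EuclideanSpace ℂ (Fin n) :=
    ((LinearMap.ker (Finsupp.linearCombination ℂ E)).liftQ
        (Finsupp.linearCombination ℂ F) ker_le).comp
      (LinearMap.quotKerEquivRange (Finsupp.linearCombination ℂ E)).symm.toLinearMap
  have Tapply : ∀ (x : LinearMap.range (Finsupp.linearCombination ℂ E)) (c : I →₀ ℂ),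
      (Finsupp.linearCombination ℂ E) c = (x : EuclideanSpace ℂ (Fin n)) →
        T x = (Finsupp.linearCombination ℂ F) c := by
    rintro ⟨x, hx⟩ c hc
    simp only [] at hc
    subst hc
    show ((LinearMap.ker (Finsupp.linearCombination ℂ E)).liftQ
        (Finsupp.linearCombination ℂ F) ker_le)
      ((LinearMap.quotKerEquivRange (Finsupp.linearCombination ℂ E)).symm
        ⟨(Finsupp.linearCombination ℂ E) c, hx⟩) = (Finsupp.linearCombination ℂ F) c
    rw [LinearMap.quotKerEquivRange_symm_apply_image, Submodule.mkQ_apply,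
      Submodule.liftQ_apply]
  have Tnorm : ∀ x : LinearMap.range (Finsupp.linearCombination ℂ E), ‖T x‖ = ‖x‖ := by
    intro x
    obtain ⟨c, hc⟩ := x.2
    rw [Tapply x c hc]
    show ‖(Finsupp.linearCombination ℂ F) c‖ = ‖(x : EuclideanSpace ℂ (Fin n))‖
    rw [← hc]
    rw [norm_eq_sqrt_re_inner (𝕜 := ℂ) ((Finsupp.linearCombination ℂ F) c),
      norm_eq_sqrt_re_inner (𝕜 := ℂ) ((Finsupp.linearCombination ℂ E) c), ← gram2]
  let L : LinearMap.range (Finsupp.linearCombination ℂ E) →ₗᵢ[ℂ] EuclideanSpace ℂ (Fin n) :=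
    ⟨T, Tnorm⟩
  refine ⟨L.extend, fun p => ?_⟩
  have h3 : (Finsupp.linearCombination ℂ E) (Finsupp.single p 1) = E p := by simp
  have hmem : E p ∈ LinearMap.range (Finsupp.linearCombination ℂ E) :=
    ⟨Finsupp.single p 1, h3⟩
  have h2 := L.extend_apply ⟨E p, hmem⟩
  have h4 : T ⟨E p, hmem⟩ = (Finsupp.linearCombination ℂ F) (Finsupp.single p 1) :=
    Tapply ⟨E p, hmem⟩ (Finsupp.single p 1) h3
  calc L.extend (E p) = L ⟨E p, hmem⟩ := h2
    _ = (Finsupp.linearCombination ℂ F) (Finsupp.single p 1) := h4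
    _ = F p := by simp

/-- Coordinates of a linear isometry of `ℂⁿ`: a matrix with orthonormal columns. -/
private theorem matrix_of_isometry {n : ℕ}
    (U : EuclideanSpace ℂ (Fin n) →ₗᵢ[ℂ] EuclideanSpace ℂ (Fin n)) :
    ∃ M : Matrix (Fin n) (Fin n) ℂ,
      (∀ i j, (∑ k, (starRingEnd ℂ) (M k i) * M k j) = if i = j then 1 else 0) ∧
      ∀ (x : EuclideanSpace ℂ (Fin n)) (i : Fin n), U x i = ∑ j, M i j * x j := by
  classical
  have hcoord : ∀ (w : EuclideanSpace ℂ (Fin n)) (i : Fin n),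
      w i = (inner ℂ ((EuclideanSpace.basisFun (Fin n) ℂ) i) w : ℂ) := by
    intro w i
    rw [EuclideanSpace.basisFun_apply, EuclideanSpace.inner_single_left]
    simp
  refine ⟨fun i j => U (EuclideanSpace.basisFun (Fin n) ℂ j) i, fun i j => ?_, fun x i => ?_⟩
  · have h5 := U.inner_map_map (EuclideanSpace.basisFun (Fin n) ℂ i)
      (EuclideanSpace.basisFun (Fin n) ℂ j)
    rw [PiLp.inner_apply] at h5
    simp only [RCLike.inner_apply] at h5
    have h6 : (inner ℂ ((EuclideanSpace.basisFun (Fin n) ℂ) i)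
        ((EuclideanSpace.basisFun (Fin n) ℂ) j) : ℂ) = if i = j then 1 else 0 := by
      rw [EuclideanSpace.basisFun_apply, EuclideanSpace.basisFun_apply,
        EuclideanSpace.inner_single_left, EuclideanSpace.single_apply]
      simp
    rw [h6] at h5
    exact Eq.trans (Finset.sum_congr rfl fun k _ => mul_comm _ _) h5
  · calc U x i = inner ℂ ((EuclideanSpace.basisFun (Fin n) ℂ) i) (U x) := hcoord _ _
      _ = inner ℂ ((EuclideanSpace.basisFun (Fin n) ℂ) i)
          (U (∑ j, (EuclideanSpace.basisFun (Fin n) ℂ).repr x j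
            • (EuclideanSpace.basisFun (Fin n) ℂ) j)) := by
          rw [OrthonormalBasis.sum_repr]
      _ = ∑ j, (EuclideanSpace.basisFun (Fin n) ℂ).repr x j
          * (inner ℂ ((EuclideanSpace.basisFun (Fin n) ℂ) i)
              (U ((EuclideanSpace.basisFun (Fin n) ℂ) j)) : ℂ) := by
          rw [map_sum, inner_sum]
          exact Finset.sum_congr rfl fun j _ => by rw [LinearIsometry.map_smul, inner_smul_right]
      _ = ∑ j, U ((EuclideanSpace.basisFun (Fin n) ℂ) j) i * x j := by
          refine Finset.sum_congr rfl fun j _ => ?_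
          rw [EuclideanSpace.basisFun_repr, ← hcoord, mul_comm]

/-- If vectors `e_λ^k`, `f_λ^k` (`1 ≤ k ≤ n`, `λ ∈ Λ`) of a Hilbert space
satisfy `∑ₖ e_λ^k ⊗ e_μ^k = ∑ₖ f_λ^k ⊗ f_μ^k` for all `λ, μ ∈ Λ`, then there is an `n × n`
unitary matrix `W` with `W (e_λ^1, …, e_λ^n)ᵀ = (f_λ^1, …, f_λ^n)ᵀ` for all `λ`. -/
theorem exists_unitary_of_rankOne_sums_eq {H : Type*} [NormedAddCommGroup H]
    [InnerProductSpace ℂ H] [CompleteSpace H] {Λ : Type*} {n : ℕ}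
    (e f : Λ → Fin n → H)
    (h : ∀ lam mu : Λ,
      ∑ k : Fin n, rankOne (e lam k) (e mu k) = ∑ k : Fin n, rankOne (f lam k) (f mu k)) :
    ∃ W : Matrix (Fin n) (Fin n) ℂ, W ∈ Matrix.unitaryGroup (Fin n) ℂ ∧
      ∀ (lam : Λ) (i : Fin n), f lam i = ∑ j : Fin n, W i j • e lam j := by
  classical
  have gram : ∀ p q : Λ × H,
      (inner ℂ (toCoords (e p.1) p.2) (toCoords (e q.1) q.2) : ℂ)
        = (inner ℂ (toCoords (f p.1) p.2) (toCoords (f q.1) q.2) : ℂ) := by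
    rintro ⟨mu, u⟩ ⟨lam, v⟩
    have h1 := congrArg (fun T : H →L[ℂ] H => (inner ℂ (T u) v : ℂ)) (h lam mu)
    simpa only [toCoords, ContinuousLinearMap.sum_apply, rankOne,
      ContinuousLinearMap.smulRight_apply, innerSL_apply_apply, sum_inner, inner_smul_left,
      PiLp.inner_apply, RCLike.inner_apply, mul_comm] using h1
  obtain ⟨U, hU⟩ := auxU (fun p : Λ × H => toCoords (e p.1) p.2)
    (fun p : Λ × H => toCoords (f p.1) p.2) gram
  obtain ⟨M, key, hUx⟩ := matrix_of_isometry U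
  refine ⟨fun i j => (starRingEnd ℂ) (M i j), ?_, ?_⟩
  · refine Matrix.mem_unitaryGroup_iff'.mpr ?_
    ext i j
    erw [Matrix.mul_apply, Matrix.one_apply]
    have h9 : ∑ k, M k i * (starRingEnd ℂ) (M k j) = if i = j then (1 : ℂ) else 0 := by
      have h10 := congrArg (starRingEnd ℂ) (key i j)
      rw [map_sum] at h10
      simpa [mul_comm, apply_ite] using h10
    refine Eq.trans (Finset.sum_congr rfl fun k _ => ?_) h9
    erw [Matrix.star_apply]
    simp [Matrix.star_apply]
  · intro lam i
    show f lam i = ∑ j, (starRingEnd ℂ) (M i j) • e lam j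
    apply ext_inner_right ℂ
    intro v
    calc (inner ℂ (f lam i) v : ℂ) = toCoords (f lam) v i := rfl
      _ = U (toCoords (e lam) v) i := by rw [hU (lam, v)]
      _ = ∑ j, M i j * toCoords (e lam) v j := hUx _ i
      _ = ∑ j, M i j * (inner ℂ (e lam j) v : ℂ) := rfl
      _ = inner ℂ (∑ j, (starRingEnd ℂ) (M i j) • e lam j) v := by
          rw [sum_inner]
          refine Finset.sum_congr rfl fun j _ => ?_
          rw [inner_smul_left]
          simp
end
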